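/- Supporting hyperplane test (Theorem 4): Let D ⊆ G be a set of m+s−1 points of the efficient/weak-efficient data set and let P ∈ ℝ^{m+s} define the hyperplane Pᵗz = 0 through D (z = (x,y)). Let w = (x^w, y^w) with x_i^w = max_j x_{ij} and y_r^w = min_j y_{rj}. If Pᵗz_j = 0 for j ∈ D, Pᵗz_j ≤ 0 for j ∈ G∖D, and Pᵗw < 0, then Pᵗz = 0 is a supporting hyperplane of the CRS production possibility set T: Pᵗz ≤ 0 for every z ∈ T and Pᵗz = 0 for some z ∈ T, z ≠ 0. -/
import Mathlib


/-- The CRS production possibility set generated by the data points indexed by `G`. -/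
def PPSG {n m s : ℕ} (x : Fin n → Fin m → ℝ) (y : Fin n → Fin s → ℝ)
    (G : Finset (Fin n)) : Set ((Fin m → ℝ) × (Fin s → ℝ)) :=
  {p | ∃ l : Fin n → ℝ, (∀ j, 0 ≤ l j) ∧
    (∀ i, ∑ j ∈ G, l j * x j i ≤ p.1 i) ∧
    (∀ r, 0 ≤ p.2 r) ∧ (∀ r, p.2 r ≤ ∑ j ∈ G, l j * y j r)}

/-- Theorem 4 (supporting hyperplane test): if `Pᵗz = uᵗy - vᵗx` vanishes on the
`m+s-1` points of `D`, is nonpositive on the rest of `G`, and is negative at the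
negative-ideal point `w`, then `Pᵗz = 0` is a supporting hyperplane of the PPS. -/
theorem supporting_hyperplane_test
    {n m s : ℕ} (hm : 0 < m) (hs : 0 < s)
    (x : Fin n → Fin m → ℝ) (y : Fin n → Fin s → ℝ)
    (hx : ∀ j i, 0 < x j i) (hy : ∀ j r, 0 < y j r)
    (G D : Finset (Fin n)) (hGne : G.Nonempty) (hDG : D ⊆ G)
    (hcard : D.card = m + s - 1)
    (u : Fin s → ℝ) (v : Fin m → ℝ)
    (hu : ∀ r, 0 ≤ u r) (hv : ∀ i, 0 ≤ v i)
    (hD0 : ∀ j ∈ D, ∑ r, u r * y j r - ∑ i, v i * x j i = 0)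
    (hGle : ∀ j ∈ G, j ∉ D → ∑ r, u r * y j r - ∑ i, v i * x j i ≤ 0)
    (hw : ∑ r, u r * (G.inf' hGne fun j => y j r) -
      ∑ i, v i * (G.sup' hGne fun j => x j i) < 0) :
    (∀ p ∈ PPSG x y G, ∑ r, u r * p.2 r - ∑ i, v i * p.1 i ≤ 0) ∧
    ∃ p ∈ PPSG x y G, p ≠ 0 ∧ ∑ r, u r * p.2 r - ∑ i, v i * p.1 i = 0 := by
  have hGle' : ∀ j ∈ G, ∑ r, u r * y j r - ∑ i, v i * x j i ≤ 0 := by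
    intro j hj
    by_cases hjD : j ∈ D
    · exact le_of_eq (hD0 j hjD)
    · exact hGle j hj hjD
  constructor
  · rintro ⟨px, py⟩ ⟨l, hl0, hlx, hpy0, hly⟩
    have h1 : ∑ r, u r * py r ≤ ∑ r, u r * ∑ j ∈ G, l j * y j r := by
      apply Finset.sum_le_sum
      intro r _
      exact mul_le_mul_of_nonneg_left (hly r) (hu r)
    have h2 : ∑ i, v i * ∑ j ∈ G, l j * x j i ≤ ∑ i, v i * px i := by
      apply Finset.sum_le_sum
      intro i _
      exact mul_le_mul_of_nonneg_left (hlx i) (hv i)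
    have h3 : ∑ r, u r * ∑ j ∈ G, l j * y j r ≤ ∑ i, v i * ∑ j ∈ G, l j * x j i := by
      have key : ∑ j ∈ G, l j * (∑ r, u r * y j r) ≤ ∑ j ∈ G, l j * (∑ i, v i * x j i) := by
        apply Finset.sum_le_sum
        intro j hj
        have := hGle' j hj
        nlinarith [hl0 j]
      calc ∑ r, u r * ∑ j ∈ G, l j * y j r
          = ∑ j ∈ G, l j * (∑ r, u r * y j r) := by
            simp_rw [Finset.mul_sum]
            rw [Finset.sum_comm]
            exact Finset.sum_congr rfl fun j _ => Finset.sum_congr rfl fun r _ => by ring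
        _ ≤ ∑ j ∈ G, l j * (∑ i, v i * x j i) := key
        _ = ∑ i, v i * ∑ j ∈ G, l j * x j i := by
            simp_rw [Finset.mul_sum]
            rw [Finset.sum_comm]
            exact Finset.sum_congr rfl fun j _ => Finset.sum_congr rfl fun i _ => by ring
    simp only
    linarith
  · have hDne : D.Nonempty := by
      rw [← Finset.card_pos, hcard]
      omega
    obtain ⟨j, hj⟩ := hDne
    refine ⟨(x j, y j), ⟨fun k => if k = j then 1 else 0, ?_, ?_, ?_, ?_⟩, ?_, hD0 j hj⟩
    · intro k; dsimp only; split <;> norm_num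
    · intro i
      dsimp only
      rw [Finset.sum_eq_single j]
      · simp
      · intro b _ hb; simp [hb]
      · intro h; exact absurd (hDG hj) h
    · intro r; exact (hy j r).le
    · intro r
      dsimp only
      rw [Finset.sum_eq_single j]
      · simp
      · intro b _ hb; simp [hb]
      · intro h; exact absurd (hDG hj) h
    · intro h
      have := congrArg (fun p => p.1 ⟨0, hm⟩) h
      simp at this
      exact absurd this (hx j ⟨0, hm⟩).ne'
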